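/- Let B be a finite-dimensional system and let σ_{AB} ∈ F_d(B). Then Tr(σ_{AB}²) + Tr(σ_B²) ≤ 1 + 1/d, where σ_B = Tr_A(σ_{AB}). -/

import Mathlib

open scoped ENNReal ComplexOrder Matrix Kronecker
open Matrix

noncomputable section


namespace EoP

/-- Partial trace over the right (second) tensor factor. -/
def ptraceRight {α β : Type*} [Fintype β] (A : Matrix (α × β) (α × β) ℂ) : Matrix α α ℂ :=
  fun a b => ∑ j, A (a, j) (b, j)

/-- Partial trace over the left (first) tensor factor. -/
def ptraceLeft {α β : Type*} [Fintype α] (A : Matrix (α × β) (α × β) ℂ) : Matrix β β ℂ :=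
  fun a b => ∑ i, A (i, a) (i, b)

/-- `Ω ⊗ id`, acting blockwise on the left tensor factor. -/
def mapLeft {α α' β : Type*} (Ω : Matrix α α ℂ → Matrix α' α' ℂ)
    (A : Matrix (α × β) (α × β) ℂ) : Matrix (α' × β) (α' × β) ℂ :=
  fun p q => Ω (fun a b => A (a, p.2) (b, q.2)) p.1 q.1

/-- `id ⊗ Λ`, acting blockwise on the right tensor factor. -/
def mapRight {α α' β : Type*} (Λ : Matrix α α ℂ → Matrix α' α' ℂ)
    (A : Matrix (β × α) (β × α) ℂ) : Matrix (β × α') (β × α') ℂ :=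
  fun p q => Λ (fun a b => A (p.1, a) (q.1, b)) p.2 q.2

/-- The normalized maximally entangled state `|Φ⟩⟨Φ|` on `α ⊗ α`. -/
def maxEntState (α : Type*) [Fintype α] [DecidableEq α] : Matrix (α × α) (α × α) ℂ :=
  fun x y => if x.1 = x.2 ∧ y.1 = y.2 then (Fintype.card α : ℂ)⁻¹ else 0

/-- Complete positivity: `Ω ⊗ id_k` preserves positive semidefiniteness for every
finite-dimensional ancilla. -/
def IsCompletelyPositive {α α' : Type*} [Fintype α] [Fintype α'] (Ω : Matrix α α ℂ → Matrix α' α' ℂ) : Prop :=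
  ∀ (k : ℕ) (A : Matrix (α × Fin k) (α × Fin k) ℂ), A.PosSemidef → (mapLeft Ω A).PosSemidef

/-- Trace preservation. -/
def IsTracePreserving {α α' : Type*} [Fintype α] [Fintype α']
    (Ω : Matrix α α ℂ → Matrix α' α' ℂ) : Prop :=
  ∀ X, (Ω X).trace = X.trace

/-- CPTP map: linear, completely positive and trace preserving. -/
def IsCPTP {α α' : Type*} [Fintype α] [Fintype α']
    (Ω : Matrix α α ℂ → Matrix α' α' ℂ) : Prop :=
  IsLinearMap ℂ Ω ∧ IsCompletelyPositive Ω ∧ IsTracePreserving Ω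

/-- Schatten `p`-norm of a (square, complex) matrix, via its singular values,
i.e. `‖A‖_p = (Tr |A|^p)^(1/p)` for `p < ∞` and the largest singular value for `p = ∞`. -/
def schattenNorm {α : Type*} [Fintype α] [DecidableEq α] (p : ℝ≥0∞)
    (A : Matrix α α ℂ) : ℝ :=
  if p = ⊤ then
    ⨆ i, Real.sqrt ((Matrix.posSemidef_conjTranspose_mul_self A).1.eigenvalues i)
  else
    (∑ i, Real.sqrt ((Matrix.posSemidef_conjTranspose_mul_self A).1.eigenvalues i) ^ p.toReal)
      ^ (1 / p.toReal)

/-- The constrained maximal output Schatten `p`-norm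
`υ_p(Ω) = sup_{E, Λ CPTP} ‖(Ω ⊗ id_E)((id ⊗ Λ)(Φ))‖_p`. -/
def upsilon {α α' : Type*} [Fintype α] [DecidableEq α] [Fintype α'] [DecidableEq α']
    (p : ℝ≥0∞) (Ω : Matrix α α ℂ → Matrix α' α' ℂ) : ℝ :=
  ⨆ e : ℕ, ⨆ Λ : {Λ : Matrix α α ℂ → Matrix (Fin e) (Fin e) ℂ // IsCPTP Λ},
    schattenNorm p (mapLeft Ω (mapRight Λ.1 (maxEntState α)))

/-- The transpose-depolarizing channel `Γ_t(X) = t Xᵀ + (1−t) Tr(X) I/d`. -/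
def Gamma (d : ℕ) (t : ℝ) (X : Matrix (Fin d) (Fin d) ℂ) : Matrix (Fin d) (Fin d) ℂ :=
  (t : ℂ) • Xᵀ + (((1 - t) / (d : ℝ) : ℝ) : ℂ) • X.trace • (1 : Matrix (Fin d) (Fin d) ℂ)

/-- The completely depolarizing map `D(X) = Tr(X) I/d`. -/
def depol (d : ℕ) (X : Matrix (Fin d) (Fin d) ℂ) : Matrix (Fin d) (Fin d) ℂ :=
  ((d : ℂ)⁻¹) • X.trace • (1 : Matrix (Fin d) (Fin d) ℂ)

/-- `n`-fold tensor power of a (linear) map on matrix algebras. -/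
def tensorPowMap {α α' : Type*} [Fintype α] [DecidableEq α] (n : ℕ)
    (Φ : Matrix α α ℂ → Matrix α' α' ℂ)
    (X : Matrix (Fin n → α) (Fin n → α) ℂ) :
    Matrix (Fin n → α') (Fin n → α') ℂ :=
  fun a b => ∑ k : Fin n → α, ∑ l : Fin n → α,
    (∏ i, Φ (Matrix.single (k i) (l i) 1) (a i) (b i)) * X k l

/-- The swap (flip) operator on `ℂ^d ⊗ ℂ^d`. -/
def swapOp (d : ℕ) : Matrix (Fin d × Fin d) (Fin d × Fin d) ℂ :=
  fun p q => if p.1 = q.2 ∧ p.2 = q.1 then 1 else 0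

section Aux

open scoped Kronecker

/-- trace of `Xᴴ * X` is nonnegative (in the complex order). -/
lemma trace_conjTranspose_mul_self_nonneg' {n : Type*} [Fintype n]
    (X : Matrix n n ℂ) : 0 ≤ (Xᴴ * X).trace := by
  rw [Matrix.trace]
  refine Finset.sum_nonneg fun i _ => ?_
  rw [Matrix.diag_apply, Matrix.mul_apply]
  refine Finset.sum_nonneg fun j _ => ?_
  simpa [Matrix.conjTranspose_apply] using star_mul_self_nonneg (X j i)

open scoped MatrixOrder in
theorem Matrix.posSemidef_iff_eq_transpose_mul_self {n : Type*} [Fintype n] {A : Matrix n n ℂ} :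
    A.PosSemidef ↔ ∃ B : Matrix n n ℂ, A = Bᴴ * B := by
  classical
  constructor
  · intro hA
    obtain ⟨X, hX, -, rfl⟩ := CFC.exists_sqrt_of_isSelfAdjoint_of_quasispectrumRestricts
      hA.isHermitian (QuasispectrumRestricts.nnreal_of_nonneg hA.nonneg)
    exact ⟨X, by rw [← Matrix.star_eq_conjTranspose, hX.star_eq]⟩
  · rintro ⟨B, rfl⟩
    exact Matrix.posSemidef_conjTranspose_mul_self B

lemma trace_mul_nonneg' {n : Type*} [Fintype n] {M N : Matrix n n ℂ}
    (hM : M.PosSemidef) (hN : N.PosSemidef) : 0 ≤ (M * N).trace := by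
  obtain ⟨P, rfl⟩ := Matrix.posSemidef_iff_eq_transpose_mul_self.mp hM
  obtain ⟨Q, rfl⟩ := Matrix.posSemidef_iff_eq_transpose_mul_self.mp hN
  have : (Pᴴ * P * (Qᴴ * Q)).trace = ((P * Qᴴ)ᴴ * (P * Qᴴ)).trace := by
    rw [Matrix.conjTranspose_mul, Matrix.conjTranspose_conjTranspose]
    rw [show Pᴴ * P * (Qᴴ * Q) = Pᴴ * ((P * Qᴴ) * Q) by noncomm_ring,
        Matrix.trace_mul_comm,
        show P * Qᴴ * Q * Pᴴ = (P * Qᴴ) * (Q * Pᴴ) by noncomm_ring,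
        show Q * Pᴴ * (P * Qᴴ) = (Q * Pᴴ) * (P * Qᴴ) by noncomm_ring,
        Matrix.trace_mul_comm]
  rw [this]
  exact trace_conjTranspose_mul_self_nonneg' _

lemma conjTranspose_kronecker' {m n : Type*} (A : Matrix m m ℂ) (B : Matrix n n ℂ) :
    (A ⊗ₖ B)ᴴ = Aᴴ ⊗ₖ Bᴴ := by
  ext ⟨i, j⟩ ⟨k, l⟩
  simp [Matrix.conjTranspose_apply, Matrix.kroneckerMap_apply]

lemma posSemidef_kronecker' {m n : Type*} [Fintype m] [Fintype n] [DecidableEq m] [DecidableEq n]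
    {A : Matrix m m ℂ} {B : Matrix n n ℂ} (hA : A.PosSemidef) (hB : B.PosSemidef) :
    (A ⊗ₖ B).PosSemidef := by
  obtain ⟨P, rfl⟩ := Matrix.posSemidef_iff_eq_transpose_mul_self.mp hA
  obtain ⟨Q, rfl⟩ := Matrix.posSemidef_iff_eq_transpose_mul_self.mp hB
  rw [Matrix.mul_kronecker_mul, ← conjTranspose_kronecker']
  exact Matrix.posSemidef_conjTranspose_mul_self _

/-- The swap matrix on `α ⊗ α`. -/
def swapMat (α : Type*) [DecidableEq α] : Matrix (α × α) (α × α) ℂ :=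
  fun p q => if p.1 = q.2 ∧ p.2 = q.1 then 1 else 0

lemma swapMat_conjTranspose (α : Type*) [DecidableEq α] :
    (swapMat α)ᴴ = swapMat α := by
  ext ⟨i, j⟩ ⟨k, l⟩
  simp only [Matrix.conjTranspose_apply, swapMat]
  split_ifs with h1 h2 h2 <;> simp_all

lemma swapMat_mul_self (α : Type*) [DecidableEq α] [Fintype α] :
    swapMat α * swapMat α = 1 := by
  ext ⟨i, j⟩ ⟨k, l⟩
  simp only [Matrix.mul_apply, swapMat, Fintype.sum_prod_type, Matrix.one_apply,
    ite_and, Prod.mk.injEq]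
  simp [Finset.sum_ite_eq, Finset.sum_ite_eq', eq_comm, and_comm]

lemma posSemidef_of_sq_eq_two_smul' {n : Type*} [Fintype n] {M : Matrix n n ℂ}
    (hH : Mᴴ = M) (hsq : M * M = (2 : ℂ) • M) : M.PosSemidef := by
  rw [Matrix.posSemidef_iff_eq_transpose_mul_self]
  refine ⟨((Real.sqrt 2 : ℂ))⁻¹ • M, ?_⟩
  rw [Matrix.conjTranspose_smul, hH, Matrix.smul_mul, Matrix.mul_smul, hsq]
  rw [smul_smul, smul_smul]
  have h2 : ((Real.sqrt 2 : ℂ))⁻¹ = ((Real.sqrt 2)⁻¹ : ℝ) := by push_cast; ring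
  have : star ((Real.sqrt 2 : ℂ))⁻¹ * ((Real.sqrt 2 : ℂ))⁻¹ * 2 = 1 := by
    have hs : star ((Real.sqrt 2 : ℂ))⁻¹ = ((Real.sqrt 2 : ℂ))⁻¹ := by
      rw [h2]; exact Complex.conj_ofReal _
    rw [hs, ← mul_inv, ← Complex.ofReal_mul, Real.mul_self_sqrt (by norm_num : (0:ℝ) ≤ 2)]
    norm_num
  rw [this, one_smul]

lemma posSemidef_one_add_swap (α : Type*) [DecidableEq α] [Fintype α] :
    (1 + swapMat α).PosSemidef := by
  refine posSemidef_of_sq_eq_two_smul' ?_ ?_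
  · rw [Matrix.conjTranspose_add, Matrix.conjTranspose_one, swapMat_conjTranspose]
  · simp only [add_mul, mul_add, one_mul, mul_one, swapMat_mul_self, two_smul]
    abel

lemma posSemidef_one_sub_swap (α : Type*) [DecidableEq α] [Fintype α] :
    (1 - swapMat α).PosSemidef := by
  refine posSemidef_of_sq_eq_two_smul' ?_ ?_
  · rw [Matrix.conjTranspose_sub, Matrix.conjTranspose_one, swapMat_conjTranspose]
  · simp only [sub_mul, mul_sub, one_mul, mul_one, swapMat_mul_self, two_smul]
    abel

variable {α β : Type*} [Fintype α] [Fintype β] [DecidableEq α] [DecidableEq β]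

def E1mat (α β : Type*) [DecidableEq α] [DecidableEq β] :
    Matrix ((α × β) × (α × β)) ((α × β) × (α × β)) ℂ :=
  Matrix.of fun p q =>
    if (p.1.1 = q.1.1 ∧ p.2.1 = q.2.1) ∧ (p.1.2 = q.1.2 ∧ p.2.2 = q.2.2) then 1 else 0
def E2mat (α β : Type*) [DecidableEq α] [DecidableEq β] :
    Matrix ((α × β) × (α × β)) ((α × β) × (α × β)) ℂ :=
  Matrix.of fun p q =>
    if (p.1.1 = q.2.1 ∧ p.2.1 = q.1.1) ∧ (p.1.2 = q.2.2 ∧ p.2.2 = q.1.2) then 1 else 0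
def E3mat (α β : Type*) [DecidableEq α] [DecidableEq β] :
    Matrix ((α × β) × (α × β)) ((α × β) × (α × β)) ℂ :=
  Matrix.of fun p q =>
    if (p.1.1 = q.1.1 ∧ p.2.1 = q.2.1) ∧ (p.1.2 = q.2.2 ∧ p.2.2 = q.1.2) then 1 else 0
def E4mat (α β : Type*) [DecidableEq α] [DecidableEq β] :
    Matrix ((α × β) × (α × β)) ((α × β) × (α × β)) ℂ :=
  Matrix.of fun p q =>
    if (p.1.1 = q.2.1 ∧ p.2.1 = q.1.1) ∧ (p.1.2 = q.1.2 ∧ p.2.2 = q.2.2) then 1 else 0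

/-- The reshuffling `(α×β)×(α×β) → (α×α)×(β×β)`. -/
def reshuffle (α β : Type*) : (α × β) × (α × β) → (α × α) × (β × β) :=
  fun p => ((p.1.1, p.2.1), (p.1.2, p.2.2))

/-- The PSD witness `(1 + S_A) ⊗ (1 - S_B)` in reshuffled coordinates. -/
def Gmat (α β : Type*) [Fintype α] [Fintype β] [DecidableEq α] [DecidableEq β] :
    Matrix ((α × β) × (α × β)) ((α × β) × (α × β)) ℂ :=
  (((1 + swapMat α) ⊗ₖ (1 - swapMat β)).submatrix (reshuffle α β) (reshuffle α β))

lemma Gmat_posSemidef : (Gmat α β).PosSemidef :=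
  (posSemidef_kronecker' (posSemidef_one_add_swap α) (posSemidef_one_sub_swap β)).submatrix _

lemma key {P1 P2 Q1 Q2 : Prop} [Decidable P1] [Decidable P2] [Decidable Q1] [Decidable Q2] :
    ((if P1 then (1:ℂ) else 0) + (if P2 then 1 else 0)) *
      ((if Q1 then (1:ℂ) else 0) - (if Q2 then 1 else 0)) =
    (if P1 ∧ Q1 then (1:ℂ) else 0) + (if P2 ∧ Q1 then 1 else 0)
      - (if P1 ∧ Q2 then 1 else 0) - (if P2 ∧ Q2 then 1 else 0) := by
  by_cases h1 : P1 <;> by_cases h2 : P2 <;> by_cases h3 : Q1 <;> by_cases h4 : Q2 <;>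
    simp [h1, h2, h3, h4] <;> ring

lemma Gmat_decomp :
    Gmat α β = E1mat α β + E4mat α β - E3mat α β - E2mat α β := by
  ext p q
  simp only [Gmat, Matrix.submatrix_apply, reshuffle, Matrix.kroneckerMap_apply,
    Matrix.add_apply, Matrix.sub_apply, Matrix.one_apply, swapMat,
    E1mat, E2mat, E3mat, E4mat, Matrix.of_apply, Prod.mk.injEq]
  exact key

lemma trace_kron_E1 (σ : Matrix (α × β) (α × β) ℂ) :
    ((σ ⊗ₖ σ) * E1mat α β).trace = σ.trace * σ.trace := by
  simp only [Matrix.trace, Matrix.diag, Matrix.mul_apply, Matrix.kroneckerMap_apply, E1mat,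
    Matrix.of_apply, Fintype.sum_prod_type, mul_ite, mul_one, mul_zero, ite_and,
    Finset.sum_ite_irrel, Finset.sum_ite_eq, Finset.sum_ite_eq', Finset.mem_univ, if_true,
    Finset.sum_const_zero, Finset.mul_sum, Finset.sum_mul]
  exact Finset.sum_congr rfl fun x _ => Finset.sum_congr rfl fun a _ =>
    Finset.sum_congr rfl fun c _ => Finset.sum_congr rfl fun b _ => mul_comm _ _

lemma trace_kron_E2 (σ : Matrix (α × β) (α × β) ℂ) :
    ((σ ⊗ₖ σ) * E2mat α β).trace = (σ * σ).trace := by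
  simp only [Matrix.trace, Matrix.diag, Matrix.mul_apply, Matrix.kroneckerMap_apply, E2mat,
    Matrix.of_apply, Fintype.sum_prod_type, mul_ite, mul_one, mul_zero, ite_and,
    Finset.sum_ite_irrel, Finset.sum_ite_eq, Finset.sum_ite_eq', Finset.mem_univ, if_true,
    Finset.sum_const_zero]

lemma trace_kron_E3 (σ : Matrix (α × β) (α × β) ℂ) :
    ((σ ⊗ₖ σ) * E3mat α β).trace = (ptraceLeft σ * ptraceLeft σ).trace := by
  simp only [Matrix.trace, Matrix.diag, Matrix.mul_apply, Matrix.kroneckerMap_apply, E3mat,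
    Matrix.of_apply, ptraceLeft, Fintype.sum_prod_type, mul_ite, mul_one, mul_zero, ite_and,
    Finset.sum_ite_irrel, Finset.sum_ite_eq, Finset.sum_ite_eq', Finset.mem_univ, if_true,
    Finset.sum_const_zero, Finset.mul_sum, Finset.sum_mul]
  rw [Finset.sum_comm]
  refine Finset.sum_congr rfl fun y _ => ?_
  rw [Finset.sum_comm]
  conv_lhs => enter [2, x1]; rw [Finset.sum_comm]
  rw [Finset.sum_comm]

lemma trace_kron_E4 (σ : Matrix (α × β) (α × β) ℂ) :
    ((σ ⊗ₖ σ) * E4mat α β).trace = (ptraceRight σ * ptraceRight σ).trace := by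
  simp only [Matrix.trace, Matrix.diag, Matrix.mul_apply, Matrix.kroneckerMap_apply, E4mat,
    Matrix.of_apply, ptraceRight, Fintype.sum_prod_type, mul_ite, mul_one, mul_zero, ite_and,
    Finset.sum_ite_irrel, Finset.sum_ite_eq, Finset.sum_ite_eq', Finset.mem_univ, if_true,
    Finset.sum_const_zero, Finset.mul_sum, Finset.sum_mul]
  refine Finset.sum_congr rfl fun x _ => ?_
  rw [Finset.sum_comm]
  refine Finset.sum_congr rfl fun c _ => ?_
  rw [Finset.sum_comm]

end Aux

/-- Purity trade-off on `F_d(B)`: `Tr(σ_{AB}²) + Tr(σ_B²) ≤ 1 + 1/d`. -/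
theorem purity_tradeoff_Fd
    (d : ℕ) (B : Type*) [Fintype B] [DecidableEq B]
    (σ : Matrix (Fin d × B) (Fin d × B) ℂ)
    (hσ : σ.PosSemidef) (htr : σ.trace = 1)
    (hmar : ptraceRight σ = (d : ℂ)⁻¹ • (1 : Matrix (Fin d) (Fin d) ℂ)) :
    (σ * σ).trace + (ptraceLeft σ * ptraceLeft σ).trace ≤ 1 + (d : ℂ)⁻¹ := by
  classical
  have hd : (d : ℂ) ≠ 0 := by
    intro h
    have hd0 : d = 0 := by exact_mod_cast h
    subst hd0
    simp [Matrix.trace, Fintype.sum_prod_type] at htr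
  have hσσ : ((σ ⊗ₖ σ)).PosSemidef := posSemidef_kronecker' hσ hσ
  have h0 : 0 ≤ ((σ ⊗ₖ σ) * Gmat (Fin d) B).trace :=
    trace_mul_nonneg' hσσ Gmat_posSemidef
  have htrace : ((σ ⊗ₖ σ) * Gmat (Fin d) B).trace =
      σ.trace * σ.trace + (ptraceRight σ * ptraceRight σ).trace
        - (ptraceLeft σ * ptraceLeft σ).trace - (σ * σ).trace := by
    rw [Gmat_decomp, Matrix.mul_sub, Matrix.mul_sub, Matrix.mul_add,
      Matrix.trace_sub, Matrix.trace_sub, Matrix.trace_add,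
      trace_kron_E1, trace_kron_E3, trace_kron_E4, trace_kron_E2]
  have hmar2 : (ptraceRight σ * ptraceRight σ).trace = (d : ℂ)⁻¹ := by
    rw [hmar, Matrix.smul_mul, Matrix.mul_smul, Matrix.one_mul, smul_smul,
      Matrix.trace_smul, Matrix.trace_one]
    simp [Fintype.card_fin]
    field_simp
  rw [htrace, htr, hmar2, one_mul] at h0
  have hfinal : (1 : ℂ) + (d : ℂ)⁻¹ - ((σ * σ).trace + (ptraceLeft σ * ptraceLeft σ).trace)
      = 1 + (d : ℂ)⁻¹ - (ptraceLeft σ * ptraceLeft σ).trace - (σ * σ).trace := by ring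
  have := sub_nonneg.mp (by rw [hfinal]; exact h0)
  exact this


end EoP
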